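/- Let C be a pointed, spanning polyhedral cone in E = ℝⁿ, let D ⊆ E be a downset, let τ ⊆ σ be faces of C, and let a be a cogenerator of D along τ with nadir σ. Then there exists u ∈ a − σ° such that every point x ∈ (u + σ° + C) ∩ D is globally supported on τ, meaning: for every face τ' of C with τ' ⊄ τ there exists t ∈ τ' with x + t ∉ D. -/

import Mathlib

open Pointwise

/-- A polyhedral cone in `ℝⁿ`: an intersection of finitely many closed linear half-spaces. -/
def IsPolyCone {n : ℕ} (C : Set (Fin n → ℝ)) : Prop :=
  ∃ (m : ℕ) (ℓ : Fin m → ((Fin n → ℝ) →ₗ[ℝ] ℝ)), C = {x | ∀ i, 0 ≤ ℓ i x}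

/-- A face of a cone `C`: a subset of `C` containing `0`, closed under addition, and such
that whenever `x, y ∈ C` and `x + y` lies in the subset, both `x` and `y` do. -/
def IsConeFace {M : Type*} [AddCommMonoid M] (σ C : Set M) : Prop :=
  σ ⊆ C ∧ (0 : M) ∈ σ ∧ (∀ x ∈ σ, ∀ y ∈ σ, x + y ∈ σ) ∧
    ∀ x ∈ C, ∀ y ∈ C, x + y ∈ σ → x ∈ σ ∧ y ∈ σ

/-- A downset for the partial order `x ≼ y ↔ y - x ∈ C`. -/
def IsDownset {n : ℕ} (C D : Set (Fin n → ℝ)) : Prop :=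
  ∀ x y : Fin n → ℝ, y ∈ D → y - x ∈ C → x ∈ D

/-- The upper boundary downset `D^σ = {a | a - σ° ⊆ D}`. -/
def upSet {n : ℕ} (D σ : Set (Fin n → ℝ)) : Set (Fin n → ℝ) :=
  {a | ∀ s ∈ intrinsicInterior ℝ σ, a - s ∈ D}

/-- `a` is a cogenerator of the downset `D` along the face `τ` with nadir `σ`:
`(a + C) ∩ D^σ = a + τ` and no face `σ''` with `τ ⊆ σ'' ⊊ σ` satisfies `a - σ''° ⊆ D`. -/
def IsCogen {n : ℕ} (C D τ σ : Set (Fin n → ℝ)) (a : Fin n → ℝ) : Prop :=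
  (({a} + C) ∩ upSet D σ = {a} + τ) ∧
  ∀ σ'' : Set (Fin n → ℝ), IsConeFace σ'' C → τ ⊆ σ'' → σ'' ⊂ σ →
    ¬ (∀ s ∈ intrinsicInterior ℝ σ'', a - s ∈ D)

/-- A `σ`-vicinity of a point `p` of `E ⧸ span τ`: the image under the quotient map of
`u + σ° + C` for some `u` admitting a representative `w` of `p` with `w - u ∈ σ°`. -/
def IsVic {n : ℕ} (C σ τ : Set (Fin n → ℝ))
    (p : (Fin n → ℝ) ⧸ Submodule.span ℝ τ)
    (V : Set ((Fin n → ℝ) ⧸ Submodule.span ℝ τ)) : Prop :=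
  ∃ u w : Fin n → ℝ, (Submodule.span ℝ τ).mkQ w = p ∧
    w - u ∈ intrinsicInterior ℝ σ ∧
    V = (Submodule.span ℝ τ).mkQ '' ({u} + intrinsicInterior ℝ σ + C)

section
open Set

section Basics

variable {n : ℕ} {C σ : Set (Fin n → ℝ)}

lemma polyCone_zero_mem (hC : IsPolyCone C) : (0 : Fin n → ℝ) ∈ C := by
  obtain ⟨m, ℓ, rfl⟩ := hC
  intro i; simp

lemma polyCone_add_mem (hC : IsPolyCone C) {x y : Fin n → ℝ} (hx : x ∈ C) (hy : y ∈ C) :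
    x + y ∈ C := by
  obtain ⟨m, ℓ, rfl⟩ := hC
  intro i; simpa using add_nonneg (hx i) (hy i)

lemma polyCone_smul_mem (hC : IsPolyCone C) {c : ℝ} (hc : 0 ≤ c) {x : Fin n → ℝ}
    (hx : x ∈ C) : c • x ∈ C := by
  obtain ⟨m, ℓ, rfl⟩ := hC
  intro i; simpa using mul_nonneg hc (hx i)

lemma face_smul_le_one (hC : IsPolyCone C) (hσ : IsConeFace σ C) {c : ℝ} (h0 : 0 ≤ c)
    (h1 : c ≤ 1) {x : Fin n → ℝ} (hx : x ∈ σ) : c • x ∈ σ := by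
  rcases eq_or_lt_of_le h0 with rfl | h0'
  · simpa using hσ.2.1
  rcases eq_or_lt_of_le h1 with rfl | h1'
  · simpa using hx
  have hxC : x ∈ C := hσ.1 hx
  have h1c : (0:ℝ) ≤ 1 - c := by linarith
  have key : c • x + (1 - c) • x ∈ σ := by
    rw [← add_smul]
    simpa using hx
  exact (hσ.2.2.2 _ (polyCone_smul_mem hC h0 hxC) _ (polyCone_smul_mem hC h1c hxC) key).1

lemma face_smul (hC : IsPolyCone C) (hσ : IsConeFace σ C) {c : ℝ} (h0 : 0 ≤ c)
    {x : Fin n → ℝ} (hx : x ∈ σ) : c • x ∈ σ := by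
  have hnat : ∀ (k : ℕ) (y : Fin n → ℝ), y ∈ σ → (k : ℝ) • y ∈ σ := by
    intro k
    induction k with
    | zero => intro y _; simpa using hσ.2.1
    | succ k ih =>
      intro y hy
      have : ((k : ℝ) + 1) • y = (k : ℝ) • y + y := by rw [add_smul, one_smul]
      rw [Nat.cast_succ, this]
      exact hσ.2.2.1 _ (ih y hy) _ hy
  rcases eq_or_lt_of_le h0 with rfl | h0'
  · simpa using hσ.2.1
  set m : ℕ := ⌈c⌉₊ with hm
  have hcm : c ≤ (m : ℝ) := Nat.le_ceil c
  have hmpos : (0:ℝ) < m := lt_of_lt_of_le h0' hcm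
  have hdiv : c / m ≤ 1 := (div_le_one hmpos).mpr hcm
  have hdiv0 : 0 ≤ c / m := div_nonneg h0 hmpos.le
  have : c • x = (m : ℝ) • ((c / m) • x) := by
    rw [smul_smul, mul_div_cancel₀ _ (ne_of_gt hmpos)]
  rw [this]
  exact hnat m _ (face_smul_le_one hC hσ hdiv0 hdiv hx)

lemma face_convex (hC : IsPolyCone C) (hσ : IsConeFace σ C) : Convex ℝ σ := by
  intro x hx y hy a b ha hb hab
  have ha1 : a ≤ 1 := by linarith
  have hb1 : b ≤ 1 := by linarith
  exact hσ.2.2.1 _ (face_smul_le_one hC hσ ha ha1 hx) _ (face_smul_le_one hC hσ hb hb1 hy)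

lemma face_sum (hσ : IsConeFace σ C) {ι : Type*} (F : Finset ι) (g : ι → (Fin n → ℝ))
    (h : ∀ i ∈ F, g i ∈ σ) : ∑ i ∈ F, g i ∈ σ :=
  Finset.sum_induction g (· ∈ σ) (fun a b ha hb => hσ.2.2.1 a ha b hb) hσ.2.1 h

end Basics

section Intrinsic

variable {n : ℕ}

lemma intrinsicInterior_eq_interior_of_affineSpan_univ {W : Type*} [NormedAddCommGroup W]
    [NormedSpace ℝ W] {s : Set W} (h : (affineSpan ℝ s : Set W) = Set.univ) :
    intrinsicInterior ℝ s = interior s := by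
  apply subset_antisymm
  · rintro x ⟨y, hy, rfl⟩
    obtain ⟨U, hUsub, hUopen, hyU⟩ := mem_interior.mp hy
    obtain ⟨W', hW'open, rfl⟩ := isOpen_induced_iff.mp hUopen
    apply mem_interior.mpr
    refine ⟨W', ?_, hW'open, hyU⟩
    intro v hv
    have hvmem : v ∈ affineSpan ℝ s := by
      have : v ∈ (affineSpan ℝ s : Set W) := by rw [h]; trivial
      exact this
    exact hUsub (show (⟨v, hvmem⟩ : affineSpan ℝ s) ∈ _ from hv)
  · exact interior_subset_intrinsicInterior

lemma span_preimage_top {σ : Set (Fin n → ℝ)} (h0 : (0 : Fin n → ℝ) ∈ σ) :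
    Submodule.span ℝ ((Subtype.val : Submodule.span ℝ σ → _) ⁻¹' σ) = ⊤ := by
  have hrange : σ ⊆ Set.range (Submodule.span ℝ σ).subtype := by
    intro x hx
    exact ⟨⟨x, Submodule.subset_span hx⟩, rfl⟩
  have := Submodule.span_preimage_eq (f := (Submodule.span ℝ σ).subtype) ⟨0, h0⟩ hrange
  rw [show ((Subtype.val : Submodule.span ℝ σ → _) ⁻¹' σ)
      = ((Submodule.span ℝ σ).subtype ⁻¹' σ) from rfl, this]
  rw [Submodule.comap_subtype_self]

lemma affineSpan_preimage_univ {σ : Set (Fin n → ℝ)} (h0 : (0 : Fin n → ℝ) ∈ σ) :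
    (affineSpan ℝ ((Subtype.val : Submodule.span ℝ σ → _) ⁻¹' σ) :
      Set (Submodule.span ℝ σ)) = Set.univ := by
  have h0' : (0 : Submodule.span ℝ σ) ∈ (Subtype.val ⁻¹' σ : Set (Submodule.span ℝ σ)) := by
    simpa using h0
  rw [← Set.insert_eq_self.mpr h0', affineSpan_insert_zero, span_preimage_top h0]
  simp

lemma intrinsicInterior_eq_image {σ : Set (Fin n → ℝ)} (h0 : (0 : Fin n → ℝ) ∈ σ) :
    intrinsicInterior ℝ σ =
      Subtype.val '' interior ((Subtype.val : Submodule.span ℝ σ → _) ⁻¹' σ) := by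
  set V := Submodule.span ℝ σ with hV
  set φ := V.subtypeₗᵢ.toAffineIsometry with hφ
  have hcoe : ⇑φ = (Subtype.val : V → (Fin n → ℝ)) := rfl
  have himg : φ '' (Subtype.val ⁻¹' σ) = σ := by
    rw [hcoe, Set.image_preimage_eq_inter_range, Subtype.range_coe_subtype]
    exact Set.inter_eq_self_of_subset_left Submodule.subset_span
  conv_lhs => rw [← himg]
  rw [AffineIsometry.image_intrinsicInterior,
    intrinsicInterior_eq_interior_of_affineSpan_univ (affineSpan_preimage_univ h0), hcoe]

end Intrinsic

section Relint

variable {n : ℕ} {C σ : Set (Fin n → ℝ)}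

lemma combo_mem_intrinsicInterior (hC : IsPolyCone C) (hσ : IsConeFace σ C)
    {x z : Fin n → ℝ} (hx : x ∈ intrinsicInterior ℝ σ) (hz : z ∈ σ) {l : ℝ}
    (hl0 : 0 < l) (hl1 : l ≤ 1) : l • x + (1 - l) • z ∈ intrinsicInterior ℝ σ := by
  have h0 : (0 : Fin n → ℝ) ∈ σ := hσ.2.1
  rw [intrinsicInterior_eq_image h0] at hx ⊢
  obtain ⟨x', hx', rfl⟩ := hx
  have hconv : Convex ℝ ((Subtype.val : Submodule.span ℝ σ → _) ⁻¹' σ) :=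
    (face_convex hC hσ).linear_preimage (Submodule.span ℝ σ).subtype
  have hz'mem : (⟨z, Submodule.subset_span hz⟩ : Submodule.span ℝ σ)
      ∈ (Subtype.val : Submodule.span ℝ σ → _) ⁻¹' σ := hz
  have hmem : l • x' + (1 - l) • (⟨z, Submodule.subset_span hz⟩ : Submodule.span ℝ σ)
      ∈ interior ((Subtype.val : Submodule.span ℝ σ → _) ⁻¹' σ) :=
    hconv.combo_interior_self_mem_interior hx' hz'mem hl0 (by linarith) (by linarith)
  exact ⟨_, hmem, by simp⟩

lemma intrinsicInterior_add_mem (hC : IsPolyCone C) (hσ : IsConeFace σ C)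
    {x v : Fin n → ℝ} (hx : x ∈ intrinsicInterior ℝ σ) (hv : v ∈ σ) :
    x + v ∈ intrinsicInterior ℝ σ := by
  have hxσ : x ∈ σ := intrinsicInterior_subset hx
  have h2v : x + (2:ℝ) • v ∈ σ := hσ.2.2.1 _ hxσ _ (face_smul hC hσ (by norm_num) hv)
  have := combo_mem_intrinsicInterior hC hσ hx h2v (l := 1/2) (by norm_num) (by norm_num)
  have heq : (1/2 : ℝ) • x + (1 - 1/2 : ℝ) • (x + (2:ℝ) • v) = x + v := by module
  rwa [heq] at this

lemma smul_mem_intrinsicInterior (hC : IsPolyCone C) (hσ : IsConeFace σ C)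
    {x : Fin n → ℝ} (hx : x ∈ intrinsicInterior ℝ σ) {l : ℝ} (hl0 : 0 < l) (hl1 : l ≤ 1) :
    l • x ∈ intrinsicInterior ℝ σ := by
  have := combo_mem_intrinsicInterior hC hσ hx hσ.2.1 hl0 hl1
  have heq : l • x + (1 - l) • (0 : Fin n → ℝ) = l • x := by module
  rwa [heq] at this

lemma exists_sub_smul_mem (hσ : IsConeFace σ C)
    {x y : Fin n → ℝ} (hx : x ∈ intrinsicInterior ℝ σ) (hy : y ∈ σ) :
    ∃ t : ℝ, 0 < t ∧ x - t • y ∈ σ := by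
  have h0 : (0 : Fin n → ℝ) ∈ σ := hσ.2.1
  rw [intrinsicInterior_eq_image h0] at hx
  obtain ⟨x', hx', rfl⟩ := hx
  obtain ⟨ε, hε, hball⟩ := Metric.isOpen_iff.mp isOpen_interior x' hx'
  set y' : Submodule.span ℝ σ := ⟨y, Submodule.subset_span hy⟩ with hy'
  have hpos : (0:ℝ) < ‖y'‖ + 1 := by positivity
  refine ⟨ε / (2 * (‖y'‖ + 1)), by positivity, ?_⟩
  have ht0 : 0 < ε / (2 * (‖y'‖ + 1)) := by positivity
  have hmem : x' - (ε / (2 * (‖y'‖ + 1))) • y' ∈ Metric.ball x' ε := by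
    rw [Metric.mem_ball, dist_eq_norm]
    have h1 : x' - (ε / (2 * (‖y'‖ + 1))) • y' - x' = -((ε / (2 * (‖y'‖ + 1))) • y') := by abel
    have h2 := norm_smul (ε / (2 * (‖y'‖ + 1))) y'
    rw [h1, norm_neg, h2, Real.norm_eq_abs, abs_of_pos ht0]
    calc ε / (2 * (‖y'‖ + 1)) * ‖y'‖ ≤ ε / (2 * (‖y'‖ + 1)) * (‖y'‖ + 1) := by
          nlinarith [norm_nonneg y']
      _ = ε / 2 := by field_simp
      _ < ε := by linarith
  have hin : x' - (ε / (2 * (‖y'‖ + 1))) • y'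
      ∈ ((Subtype.val : Submodule.span ℝ σ → _) ⁻¹' σ) := interior_subset (hball hmem)
  simpa using hin

set_option synthInstance.maxHeartbeats 1000000 in
lemma intrinsicInterior_nonempty' (hC : IsPolyCone C) (hσ : IsConeFace σ C) :
    (intrinsicInterior ℝ σ).Nonempty :=
  Set.Nonempty.intrinsicInterior (face_convex hC hσ) ⟨0, hσ.2.1⟩

end Relint

section Faces

variable {n m : ℕ}

lemma face_eq_inter (ℓ : Fin m → ((Fin n → ℝ) →ₗ[ℝ] ℝ)) {ρ : Set (Fin n → ℝ)}
    (hρ : IsConeFace ρ {x | ∀ i, 0 ≤ ℓ i x}) :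
    ρ = {x | (∀ i, 0 ≤ ℓ i x) ∧ ∀ i ∈ {i | ∀ y ∈ ρ, ℓ i y = 0}, ℓ i x = 0} := by
  have hC : IsPolyCone {x | ∀ i, 0 ≤ ℓ i x} := ⟨m, ℓ, rfl⟩
  classical
  set I : Set (Fin m) := {i | ∀ y ∈ ρ, ℓ i y = 0} with hI
  apply subset_antisymm
  · intro x hx
    exact ⟨hρ.1 hx, fun i hi => hi x hx⟩
  -- construct y ∈ ρ with ℓ i y > 0 for all i ∉ I
  set g : Fin m → (Fin n → ℝ) := fun i =>
    if h : ∃ y ∈ ρ, ℓ i y ≠ 0 then h.choose else 0 with hg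
  have hgρ : ∀ i, g i ∈ ρ := by
    intro i
    show (if h : ∃ y ∈ ρ, ℓ i y ≠ 0 then h.choose else 0) ∈ ρ
    split
    · next h => exact h.choose_spec.1
    · exact hρ.2.1
  set y : Fin n → ℝ := ∑ i, g i with hy
  have hyρ : y ∈ ρ := face_sum hρ Finset.univ g (fun i _ => hgρ i)
  have hynn : ∀ i j, 0 ≤ ℓ i (g j) := fun i j => hρ.1 (hgρ j) i
  have hypos : ∀ i, i ∉ I → 0 < ℓ i y := by
    intro i hi
    have hex : ∃ y ∈ ρ, ℓ i y ≠ 0 := by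
      by_contra h
      push_neg at h
      exact hi (fun y hy => h y hy)
    have hgi : 0 < ℓ i (g i) := by
      have h1 : ℓ i (g i) ≠ 0 := by
        rw [hg]; simp only [hex, dif_pos]; exact hex.choose_spec.2
      exact lt_of_le_of_ne (hynn i i) (Ne.symm h1)
    have : ℓ i y = ∑ j, ℓ i (g j) := by rw [hy, map_sum]
    rw [this]
    exact lt_of_lt_of_le hgi (Finset.single_le_sum (fun j _ => hynn i j) (Finset.mem_univ i))
  have hyzero : ∀ i ∈ I, ℓ i y = 0 := fun i hi => hi y hyρ
  intro x hx
  obtain ⟨hxC, hxI⟩ := hx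
  -- find μ ≥ 0 with ℓ i x ≤ μ * ℓ i y for all i
  set h : Fin m → ℝ := fun j => if ℓ j y = 0 then 0 else ℓ j x / ℓ j y with hh
  have hhnn : ∀ j, 0 ≤ h j := by
    intro j
    show 0 ≤ (if ℓ j y = 0 then 0 else ℓ j x / ℓ j y)
    split
    · exact le_refl 0
    · next hne =>
      exact div_nonneg (hxC j) (hρ.1 hyρ j)
  set μ : ℝ := ∑ j, h j with hμ
  have hμnn : 0 ≤ μ := Finset.sum_nonneg (fun j _ => hhnn j)
  have hbound : ∀ i, ℓ i x ≤ μ * ℓ i y := by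
    intro i
    by_cases hiy : ℓ i y = 0
    · have hiI : i ∈ I := by
        by_contra hiI
        exact absurd hiy (ne_of_gt (hypos i hiI))
      rw [hiy, hxI i hiI, mul_zero]
    · have hy0 : 0 < ℓ i y := lt_of_le_of_ne (hρ.1 hyρ i) (Ne.symm hiy)
      have hhi : h i = ℓ i x / ℓ i y := by rw [hh]; simp [hiy]
      have : h i ≤ μ := Finset.single_le_sum (fun j _ => hhnn j) (Finset.mem_univ i)
      calc ℓ i x = (ℓ i x / ℓ i y) * ℓ i y := by field_simp
        _ = h i * ℓ i y := by rw [hhi]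
        _ ≤ μ * ℓ i y := mul_le_mul_of_nonneg_right this hy0.le
  have hμy : μ • y ∈ ρ := face_smul hC hρ hμnn hyρ
  have hsub : μ • y - x ∈ {x | ∀ i, 0 ≤ ℓ i x} := by
    intro i
    have : ℓ i (μ • y - x) = μ * ℓ i y - ℓ i x := by
      rw [map_sub, map_smul]; rfl
    rw [this]
    linarith [hbound i]
  have hsum : x + (μ • y - x) ∈ ρ := by
    have : x + (μ • y - x) = μ • y := by abel
    rw [this]; exact hμy
  exact (hρ.2.2.2 x hxC _ hsub hsum).1

lemma faces_finite {C : Set (Fin n → ℝ)} (hC : IsPolyCone C) :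
    {ρ : Set (Fin n → ℝ) | IsConeFace ρ C}.Finite := by
  obtain ⟨m, ℓ, rfl⟩ := hC
  apply Set.Finite.of_finite_image (f := fun ρ => {i | ∀ y ∈ ρ, ℓ i y = 0})
  · exact Set.toFinite _
  · intro ρ₁ h₁ ρ₂ h₂ heq
    rw [face_eq_inter ℓ h₁, face_eq_inter ℓ h₂]
    simp only [Set.mem_setOf_eq] at heq
    rw [heq]

end Faces

end

/-- Every cogenerator of `D` along `τ` with nadir `σ` has a
`σ`-vicinity inside `D` all of whose points are globally supported on `τ`. -/
theorem cogenerator_has_supported_vicinity {n : ℕ} (C D τ σ : Set (Fin n → ℝ))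
    (hC : IsPolyCone C) (hpointed : C ∩ (-C) = {0}) (hspan : C - C = Set.univ)
    (hD : IsDownset C D) (hτ : IsConeFace τ C) (hσ : IsConeFace σ C) (hts : τ ⊆ σ)
    (a : Fin n → ℝ) (ha : IsCogen C D τ σ a) :
    ∃ u : Fin n → ℝ, a - u ∈ intrinsicInterior ℝ σ ∧
      ∀ x ∈ ({u} + intrinsicInterior ℝ σ + C) ∩ D,
        ∀ τ' : Set (Fin n → ℝ), IsConeFace τ' C → ¬ τ' ⊆ τ →
          ∃ t ∈ τ', x + t ∉ D := by
  classical
  have hCz : (0 : Fin n → ℝ) ∈ C := polyCone_zero_mem hC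
  -- Key: for every face ρ not inside τ there is s ∈ σ° with a - s not in W(ρ)
  have hkey : ∀ ρ : Set (Fin n → ℝ), IsConeFace ρ C → ¬ ρ ⊆ τ →
      ∃ s, s ∈ intrinsicInterior ℝ σ ∧ ∃ t ∈ ρ, ∃ c ∈ C, a - s + t - c ∉ D := by
    intro ρ hρ hρτ
    by_contra hcon
    push_neg at hcon
    apply hρτ
    intro t' ht'
    have hmem : a + t' ∈ ({a} + C) ∩ upSet D σ := by
      constructor
      · exact Set.add_mem_add rfl (hρ.1 ht')
      · intro s hs
        have h1 := hcon s hs t' ht' 0 hCz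
        have heq : a - s + t' - 0 = a + t' - s := by abel
        rwa [heq] at h1
    rw [ha.1] at hmem
    obtain ⟨p, hp, q, hq, hpq⟩ := Set.mem_add.mp hmem
    rw [Set.mem_singleton_iff] at hp
    subst hp
    have : q = t' := by
      have := hpq
      exact add_left_cancel this
    rwa [← this]
  -- finitely many relevant faces
  have hFSfin : {ρ : Set (Fin n → ℝ) | IsConeFace ρ C ∧ ¬ ρ ⊆ τ}.Finite :=
    (faces_finite hC).subset (fun ρ h => h.1)
  obtain ⟨c₀, hc₀⟩ := intrinsicInterior_nonempty' hC hσ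
  set sel : Set (Fin n → ℝ) → (Fin n → ℝ) := fun ρ =>
    if h : ∃ s, s ∈ intrinsicInterior ℝ σ ∧ ∃ t ∈ ρ, ∃ c ∈ C, a - s + t - c ∉ D
    then h.choose else c₀ with hsel
  have hselmem : ∀ ρ, sel ρ ∈ intrinsicInterior ℝ σ := by
    intro ρ
    show (if h : ∃ s, s ∈ intrinsicInterior ℝ σ ∧ ∃ t ∈ ρ, ∃ c ∈ C, a - s + t - c ∉ D
      then h.choose else c₀) ∈ intrinsicInterior ℝ σ
    split
    · next h => exact h.choose_spec.1
    · exact hc₀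
  have hselspec : ∀ ρ, IsConeFace ρ C → ¬ ρ ⊆ τ →
      ∃ t ∈ ρ, ∃ c ∈ C, a - sel ρ + t - c ∉ D := by
    intro ρ h1 h2
    have hex := hkey ρ h1 h2
    show ∃ t ∈ ρ, ∃ c ∈ C, a - (if h : ∃ s, s ∈ intrinsicInterior ℝ σ ∧
        ∃ t ∈ ρ, ∃ c ∈ C, a - s + t - c ∉ D then h.choose else c₀) + t - c ∉ D
    rw [dif_pos hex]
    exact hex.choose_spec.2
  set F : Finset (Set (Fin n → ℝ)) := hFSfin.toFinset with hF
  set xbar : Fin n → ℝ := c₀ + ∑ ρ ∈ F, sel ρ with hxbar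
  have hsumσ : ∀ (G : Finset (Set (Fin n → ℝ))), ∑ ρ ∈ G, sel ρ ∈ σ :=
    fun G => face_sum hσ G sel (fun ρ _ => intrinsicInterior_subset (hselmem ρ))
  have hxbarInt : xbar ∈ intrinsicInterior ℝ σ :=
    intrinsicInterior_add_mem hC hσ hc₀ (hsumσ F)
  have hxbarσ : xbar ∈ σ := intrinsicInterior_subset hxbarInt
  have hxbar_sub : ∀ ρ ∈ F, xbar - sel ρ ∈ σ := by
    intro ρ hρF
    have heq : xbar - sel ρ = c₀ + ∑ ρ' ∈ F.erase ρ, sel ρ' := by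
      rw [hxbar, ← Finset.add_sum_erase F sel hρF]; abel
    rw [heq]
    exact hσ.2.2.1 _ (intrinsicInterior_subset hc₀) _ (hsumσ _)
  -- downward-scaling lemma
  have hdown : ∀ (s' : Fin n → ℝ), s' ∈ σ → ∀ t₀ t : ℝ, 0 < t → t ≤ t₀ →
      s' - t₀ • xbar ∈ σ → s' - t • xbar ∈ σ := by
    intro s' hs' t₀ t ht htt₀ hmem
    have h₀ : 0 < t₀ := lt_of_lt_of_le ht htt₀
    have heq : s' - t • xbar = (1 - t/t₀) • s' + (t/t₀) • (s' - t₀ • xbar) := by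
      rw [smul_sub, smul_smul, div_mul_cancel₀ _ (ne_of_gt h₀)]
      module
    rw [heq]
    have h1 : 0 ≤ 1 - t/t₀ := by
      have : t/t₀ ≤ 1 := (div_le_one h₀).mpr htt₀
      linarith
    have h2 : 0 ≤ t/t₀ := div_nonneg ht.le h₀.le
    exact face_convex hC hσ hs' hmem h1 h2 (by ring)
  -- a uniform small scaling factor
  have hT : ∀ (G : Finset (Set (Fin n → ℝ))), G ⊆ F →
      ∃ t : ℝ, 0 < t ∧ t ≤ 1 ∧ ∀ ρ ∈ G, sel ρ - t • xbar ∈ σ := by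
    intro G
    induction G using Finset.induction_on with
    | empty => exact fun _ => ⟨1, one_pos, le_refl 1, by simp⟩
    | insert ρ G hnot ih =>
      intro hsub
      obtain ⟨t₁, ht₁, ht₁1, hG⟩ := ih (fun x hx => hsub (Finset.mem_insert_of_mem hx))
      obtain ⟨t₂, ht₂, hρ2⟩ := exists_sub_smul_mem hσ (hselmem ρ) hxbarσ
      refine ⟨min t₁ t₂, lt_min ht₁ ht₂, le_trans (min_le_left _ _) ht₁1, ?_⟩
      intro ρ' hρ'
      rcases Finset.mem_insert.mp hρ' with rfl | hρ'G
      · exact hdown _ (intrinsicInterior_subset (hselmem ρ')) t₂ _ (lt_min ht₁ ht₂)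
          (min_le_right _ _) hρ2
      · exact hdown _ (intrinsicInterior_subset (hselmem ρ')) t₁ _ (lt_min ht₁ ht₂)
          (min_le_left _ _) (hG ρ' hρ'G)
  obtain ⟨t, ht0, ht1, htF⟩ := hT F (le_refl F)
  have hs₀ : t • xbar ∈ intrinsicInterior ℝ σ :=
    smul_mem_intrinsicInterior hC hσ hxbarInt ht0 ht1
  refine ⟨a - t • xbar, ?_, ?_⟩
  · rw [sub_sub_cancel]; exact hs₀
  intro x hx τ' hτ' hτ'τ
  obtain ⟨hxV, hxD⟩ := hx
  obtain ⟨p, hp, c₁, hc₁, hpc⟩ := Set.mem_add.mp hxV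
  obtain ⟨q, hq, s, hs, hqs⟩ := Set.mem_add.mp hp
  rw [Set.mem_singleton_iff] at hq
  subst hq
  by_contra hcon
  push_neg at hcon
  have hρF : τ' ∈ F := hFSfin.mem_toFinset.mpr ⟨hτ', hτ'τ⟩
  obtain ⟨tt, htt, cc, hcc, hbad⟩ := hselspec τ' hτ' hτ'τ
  apply hbad
  apply hD _ (x + tt) (hcon tt htt)
  have hxval : x = (a - t • xbar) + s + c₁ := by rw [← hpc, ← hqs]
  have hdiff : (x + tt) - (a - sel τ' + tt - cc) = ((sel τ' - t • xbar) + s) + (c₁ + cc) := by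
    rw [hxval]; abel
  rw [hdiff]
  refine polyCone_add_mem hC (polyCone_add_mem hC ?_ ?_) (polyCone_add_mem hC hc₁ hcc)
  · exact hσ.1 (htF τ' hρF)
  · exact hσ.1 (intrinsicInterior_subset hs)
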